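/- arXiv:2305.17986 — 3 statements merged into one kernel-verified Lean document; each statement's English description precedes it below -/
import Mathlib

section
/- Let μ be a real number, n ≥ 3 an integer, and define μ_k(t) = (2πk + t)^n + μ(2πk + t)^{n-2} for k ∈ ℤ and t ∈ ℝ. If n is odd, then for each pair of distinct real numbers μ_j ≠ μ_i and for all t ∈ [0, 2π), the functions satisfy: (2πk+t)^n + μ_j(2πk+t)^{n-2} ≠ (2πl+t)^n + μ_i(2πl+t)^{n-2} whenever (k, μ_j) ≠ (l, μ_i), provided |k| and |l| are sufficiently large (there exists N such that this holds for all |k|, |l| ≥ N). -/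
open Real

private lemma aux_pow (n : ℕ) (hn : 1 ≤ n) {x y : ℝ} (hy : 0 ≤ y) (hxy : y ≤ x) :
    (x - y) * x ^ (n - 1) ≤ x ^ n - y ^ n := by
  obtain ⟨m, rfl⟩ : ∃ m, n = m + 1 := ⟨n - 1, by omega⟩
  have hx : 0 ≤ x := hy.trans hxy
  have h1 : y ^ m ≤ x ^ m := pow_le_pow_left₀ hy hxy m
  simp only [Nat.add_sub_cancel, pow_succ]
  nlinarith [pow_nonneg hx m, pow_nonneg hy m]

private lemma lb_pow (n : ℕ) (hn : 3 ≤ n) (hodd : Odd n) (x y : ℝ)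
    (hd : 2 * π ≤ |x - y|) (hM : 2 * π ≤ max |x| |y|) :
    2 * π * (max |x| |y|) ^ (n - 1) ≤ |x ^ n - y ^ n| := by
  have hπ := pi_pos
  wlog hxy : y ≤ x with H
  · have := H n hn hodd y x (by rwa [abs_sub_comm]) (by rwa [max_comm]) hπ (le_of_not_ge hxy)
    rwa [max_comm, abs_sub_comm] at this
  have hd' : 2 * π ≤ x - y := by
    rwa [abs_of_nonneg (sub_nonneg.mpr hxy)] at hd
  rcases le_or_gt 0 y with hy | hy
  · -- 0 ≤ y ≤ x
    have hx : 0 ≤ x := hy.trans hxy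
    have hMx : max |x| |y| = x := by
      rw [abs_of_nonneg hx, abs_of_nonneg hy, max_eq_left hxy]
    rw [hMx]
    have h1 := aux_pow n (by omega) hy hxy
    have h2 : 0 ≤ x ^ (n - 1) := pow_nonneg hx _
    have h3 : 2 * π * x ^ (n - 1) ≤ x ^ n - y ^ n := by nlinarith
    rw [abs_of_nonneg (by nlinarith)]
    exact h3
  · rcases le_or_gt 0 x with hx | hx
    · -- y < 0 ≤ x mixed
      have hyn : (0:ℝ) ≤ -y := by linarith
      have e1 : (-y) ^ n = -(y ^ n) := hodd.neg_pow y
      have hMx : |x| = x := abs_of_nonneg hx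
      have hMy : |y| = -y := abs_of_neg hy
      have hMnn : 0 ≤ max |x| |y| := le_trans (by linarith) hM
      have hMn : (max |x| |y|) ^ n ≤ x ^ n - y ^ n := by
        rcases max_cases |x| |y| with ⟨h, _⟩ | ⟨h, _⟩
        · rw [h, hMx]
          have := pow_nonneg hyn n
          rw [e1] at this; linarith
        · rw [h, hMy]
          have := pow_nonneg hx n
          rw [e1]; linarith
      have epow : (max |x| |y|) ^ n = (max |x| |y|) ^ (n - 1) * (max |x| |y|) := by
        rw [← pow_succ]; congr 1; omega
      have h2 : 0 ≤ (max |x| |y|) ^ (n - 1) := pow_nonneg hMnn _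
      have h3 : 2 * π * (max |x| |y|) ^ (n - 1) ≤ x ^ n - y ^ n := by nlinarith
      rw [abs_of_nonneg (show (0:ℝ) ≤ x ^ n - y ^ n by nlinarith)]
      exact h3
    · -- y ≤ x < 0
      have h1 := aux_pow n (by omega) (show (0:ℝ) ≤ -x by linarith)
        (show -x ≤ -y by linarith)
      have e1 : (-y) ^ n = -(y ^ n) := hodd.neg_pow y
      have e2 : (-x) ^ n = -(x ^ n) := hodd.neg_pow x
      have hMx : max |x| |y| = -y := by
        rw [abs_of_neg hx, abs_of_neg hy, max_eq_right (by linarith)]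
      rw [hMx]
      have h2 : 0 ≤ (-y) ^ (n - 1) := pow_nonneg (by linarith) _
      have h3 : 2 * π * (-y) ^ (n - 1) ≤ x ^ n - y ^ n := by nlinarith
      rw [abs_of_nonneg (by nlinarith)]
      exact h3

private lemma abs_lb (a t : ℝ) (ht0 : 0 ≤ t) (ht2 : t < 2 * π) :
    2 * π * (|a| - 1) ≤ |2 * π * a + t| := by
  have hπ := pi_pos
  rcases le_or_gt 0 a with h | h
  · have hz : 0 ≤ 2 * π * a + t := by nlinarith
    rw [abs_of_nonneg h, abs_of_nonneg hz]
    nlinarith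
  · rw [abs_of_neg h]
    have h2 : -(2 * π * a + t) ≤ |2 * π * a + t| := neg_le_abs _
    nlinarith

theorem odd_n_no_exceptional_points (n : ℕ) (hn : 3 ≤ n) (hodd : Odd n)
    (μj μi : ℝ) (hμ : μj ≠ μi) :
    ∃ N : ℤ, ∀ k l : ℤ, N ≤ |k| → N ≤ |l| →
      ∀ t ∈ Set.Ico (0:ℝ) (2 * π),
        ((k, μj) ≠ (l, μi)) →
        (2 * π * k + t) ^ n + μj * (2 * π * k + t) ^ (n - 2) ≠
          (2 * π * l + t) ^ n + μi * (2 * π * l + t) ^ (n - 2) := by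
  have hπ := pi_pos
  refine ⟨⌈|μj| + |μi|⌉ + 2, ?_⟩
  intro k l hk hl t ht hne heq
  obtain ⟨ht0, ht2⟩ := ht
  set x : ℝ := 2 * π * k + t with hxdef
  set y : ℝ := 2 * π * l + t with hydef
  have hC : (0:ℝ) ≤ |μj| + |μi| := by positivity
  have hceil : (|μj| + |μi| : ℝ) ≤ ⌈|μj| + |μi|⌉ := Int.le_ceil _
  have hkR : (|μj| + |μi| + 2 : ℝ) ≤ |(k:ℝ)| := by
    have h1 : ((⌈|μj| + |μi|⌉ + 2 : ℤ) : ℝ) ≤ ((|k| : ℤ) : ℝ) := by exact_mod_cast hk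
    rw [Int.cast_abs] at h1
    push_cast at h1
    linarith
  have hlR : (|μj| + |μi| + 2 : ℝ) ≤ |(l:ℝ)| := by
    have h1 : ((⌈|μj| + |μi|⌉ + 2 : ℤ) : ℝ) ≤ ((|l| : ℤ) : ℝ) := by exact_mod_cast hl
    rw [Int.cast_abs] at h1
    push_cast at h1
    linarith
  have hxlb : 2 * π * (|μj| + |μi| + 1) ≤ |x| := by
    have h1 := abs_lb (k:ℝ) t ht0 ht2
    rw [← hxdef] at h1
    nlinarith
  have hylb : 2 * π * (|μj| + |μi| + 1) ≤ |y| := by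
    have h1 := abs_lb (l:ℝ) t ht0 ht2
    rw [← hydef] at h1
    nlinarith
  set M := max |x| |y| with hMdef
  have hxM : |x| ≤ M := le_max_left _ _
  have hyM : |y| ≤ M := le_max_right _ _
  have hMlb : 2 * π * (|μj| + |μi| + 1) ≤ M := le_trans hxlb hxM
  have hM2π : 2 * π ≤ M := by nlinarith
  by_cases hkl : k = l
  · -- same index: x = y, equality forces μj = μi
    have hxy : x = y := by rw [hxdef, hydef, hkl]
    rw [← hxy] at heq
    have hx0 : x ≠ 0 := by
      intro h
      rw [h, abs_zero] at hxlb
      nlinarith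
    have hp : x ^ (n - 2) ≠ 0 := pow_ne_zero _ hx0
    exact hμ (mul_right_cancel₀ hp (by linarith))
  · -- different indices
    have hd : 2 * π ≤ |x - y| := by
      have h1 : x - y = 2 * π * ((k:ℝ) - l) := by rw [hxdef, hydef]; ring
      rw [h1, abs_mul, abs_of_nonneg (by positivity : (0:ℝ) ≤ 2 * π)]
      have h2 : (1:ℝ) ≤ |(k:ℝ) - (l:ℝ)| := by
        have e : (k:ℝ) - (l:ℝ) = ((k - l : ℤ) : ℝ) := by push_cast; ring
        rw [e, ← Int.cast_abs]
        exact_mod_cast Int.one_le_abs (sub_ne_zero.mpr hkl)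
      nlinarith
    have hlb := lb_pow n hn hodd x y hd hM2π
    have heq2 : x ^ n - y ^ n = μi * y ^ (n - 2) - μj * x ^ (n - 2) := by linarith
    have hMnn : (0:ℝ) ≤ M := le_trans (abs_nonneg x) hxM
    have hxpow : |x| ^ (n - 2) ≤ M ^ (n - 2) := pow_le_pow_left₀ (abs_nonneg x) hxM _
    have hypow : |y| ^ (n - 2) ≤ M ^ (n - 2) := pow_le_pow_left₀ (abs_nonneg y) hyM _
    have hub : |x ^ n - y ^ n| ≤ (|μi| + |μj|) * M ^ (n - 2) := by
      rw [heq2]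
      have h1 : |μi * y ^ (n - 2)| ≤ |μi| * M ^ (n - 2) := by
        rw [abs_mul, abs_pow]
        exact mul_le_mul_of_nonneg_left hypow (abs_nonneg μi)
      have h2 : |μj * x ^ (n - 2)| ≤ |μj| * M ^ (n - 2) := by
        rw [abs_mul, abs_pow]
        exact mul_le_mul_of_nonneg_left hxpow (abs_nonneg μj)
      calc |μi * y ^ (n - 2) - μj * x ^ (n - 2)|
          ≤ |μi * y ^ (n - 2)| + |μj * x ^ (n - 2)| := abs_sub _ _
        _ ≤ |μi| * M ^ (n - 2) + |μj| * M ^ (n - 2) := by linarith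
        _ = (|μi| + |μj|) * M ^ (n - 2) := by ring
    have hpow : M ^ (n - 1) = M ^ (n - 2) * M := by rw [← pow_succ]; congr 1; omega
    have hMn2 : 0 < M ^ (n - 2) := pow_pos (by linarith) _
    rw [hpow] at hlb
    have hbig : |μi| + |μj| < 2 * π * M := by nlinarith [pi_gt_three]
    have m1 : (|μi| + |μj|) * M ^ (n - 2) < 2 * π * M * M ^ (n - 2) :=
      mul_lt_mul_of_pos_right hbig hMn2
    have m2 : 2 * π * M * M ^ (n - 2) = 2 * π * (M ^ (n - 2) * M) := by ring
    rw [m2] at m1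
    linarith
end

section
/- Suppose γ_1, ..., γ_m : [a, b] → ℂ are continuous curves with m odd, Re(γ_l(a)) < λ and Re(γ_l(b)) > λ for each l (for a fixed real number λ), and the m-tuple of curves is closed under complex conjugation at each parameter value: for every t ∈ [a,b] and every l there exists s with γ_s(t) = conj(γ_l(t)), and this pairing is multiplicity-preserving (the multiset {γ_1(t),...,γ_m(t)} is invariant under complex conjugation for each t). Then there exists l and t ∈ [a,b] with γ_l(t) = λ. -/
private lemma conj_prod_real (lam : ℝ) (S : Multiset ℂ)
    (h : Multiset.map (starRingEnd ℂ) S = S) :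
    ((S.map (fun z => z - (lam : ℂ))).prod).im = 0 := by
  have hc : (starRingEnd ℂ) ((S.map (fun z => z - (lam : ℂ))).prod)
      = (S.map (fun z => z - (lam : ℂ))).prod := by
    rw [map_multiset_prod, Multiset.map_map]
    have hfun : ((starRingEnd ℂ) ∘ fun z => z - (lam : ℂ))
        = (fun z => z - (lam : ℂ)) ∘ (starRingEnd ℂ) := by
      funext z
      simp [map_sub, Complex.conj_ofReal]
    rw [hfun, ← Multiset.map_map, h]
  exact Complex.conj_eq_iff_im.mp hc

private lemma key_sign (lam ε : ℝ) (hε : ε = 1 ∨ ε = -1) :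
    ∀ S : Multiset ℂ, Multiset.map (starRingEnd ℂ) S = S →
      (∀ z ∈ S, z.im = 0 → 0 < ε * (z.re - lam)) →
      ∃ r : ℝ, (S.map (fun z => z - (lam : ℂ))).prod = (r : ℂ) ∧ 0 < ε ^ S.card * r := by
  intro S
  induction S using Multiset.strongInductionOn with
  | ih S ih =>
    intro hS hsign
    rcases Multiset.empty_or_exists_mem S with rfl | ⟨z, hz⟩
    · exact ⟨1, by simp⟩
    by_cases hzim : z.im = 0
    · -- real element
      set S' := S.erase z with hS'
      have hmem : z ∈ S := hz
      have hconjz : (starRingEnd ℂ) z = z := Complex.conj_eq_iff_im.mpr hzim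
      have hS'conj : Multiset.map (starRingEnd ℂ) S' = S' := by
        rw [hS', Multiset.map_erase _ (starRingEnd ℂ).injective, hS, hconjz]
      have hlt : S' < S := Multiset.erase_lt.mpr hmem
      obtain ⟨r', hr', hrpos⟩ := ih S' hlt hS'conj
        (fun w hw hwim => hsign w (Multiset.mem_of_mem_erase hw) hwim)
      have hcons : z ::ₘ S' = S := Multiset.cons_erase hmem
      have hzre : z = ((z.re : ℝ) : ℂ) := by
        apply Complex.ext <;> simp [hzim]
      refine ⟨(z.re - lam) * r', ?_, ?_⟩
      · rw [← hcons, Multiset.map_cons, Multiset.prod_cons, hr']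
        push_cast
        rw [← hzre]
      · have hcard : S.card = S'.card + 1 := by
          rw [← hcons, Multiset.card_cons]
        rw [hcard, pow_succ]
        have h1 : 0 < ε * (z.re - lam) := hsign z hmem hzim
        calc (0:ℝ) < (ε * (z.re - lam)) * (ε ^ S'.card * r') := mul_pos h1 hrpos
          _ = ε ^ S'.card * ε * ((z.re - lam) * r') := by ring
    · -- non-real element: its conjugate is distinct and also in S
      have hcz : (starRingEnd ℂ) z ∈ S := by
        rw [← hS]; exact Multiset.mem_map_of_mem _ hz
      have hne : (starRingEnd ℂ) z ≠ z := fun h => hzim (Complex.conj_eq_iff_im.mp h)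
      have hcz' : (starRingEnd ℂ) z ∈ S.erase z := by
        rw [Multiset.mem_erase_of_ne hne]; exact hcz
      set S' := (S.erase z).erase ((starRingEnd ℂ) z) with hS'def
      have hS'conj : Multiset.map (starRingEnd ℂ) S' = S' := by
        rw [hS'def, Multiset.map_erase _ (starRingEnd ℂ).injective,
          Multiset.map_erase _ (starRingEnd ℂ).injective, hS, Complex.conj_conj,
          Multiset.erase_comm]
      have hlt1 : S.erase z < S := Multiset.erase_lt.mpr hz
      have hlt : S' < S := lt_trans (Multiset.erase_lt.mpr hcz') hlt1
      obtain ⟨r', hr', hrpos⟩ := ih S' hlt hS'conj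
        (fun w hw hwim => hsign w
          (Multiset.mem_of_mem_erase (Multiset.mem_of_mem_erase hw)) hwim)
      have hcons : z ::ₘ (starRingEnd ℂ) z ::ₘ S' = S := by
        rw [hS'def, Multiset.cons_erase hcz', Multiset.cons_erase hz]
      have hzsub : z - (lam : ℂ) ≠ 0 := by
        intro h
        apply hzim
        have : z = (lam : ℂ) := by linear_combination h
        rw [this]; simp
      have hnormpos : 0 < Complex.normSq (z - (lam : ℂ)) := Complex.normSq_pos.mpr hzsub
      refine ⟨Complex.normSq (z - (lam : ℂ)) * r', ?_, ?_⟩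
      · rw [← hcons, Multiset.map_cons, Multiset.map_cons, Multiset.prod_cons,
          Multiset.prod_cons, hr']
        have : (starRingEnd ℂ) z - (lam : ℂ) = (starRingEnd ℂ) (z - (lam : ℂ)) := by
          simp [map_sub, Complex.conj_ofReal]
        rw [this, ← mul_assoc, Complex.mul_conj]
        push_cast
        ring
      · have hcard : S.card = S'.card + 2 := by
          rw [← hcons, Multiset.card_cons, Multiset.card_cons]
        have hε2 : ε ^ 2 = 1 := by rcases hε with rfl | rfl <;> norm_num
        rw [hcard, pow_add, hε2, mul_one]
        calc (0:ℝ) < Complex.normSq (z - (lam : ℂ)) * (ε ^ S'.card * r') :=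
              mul_pos hnormpos hrpos
          _ = ε ^ S'.card * (Complex.normSq (z - (lam : ℂ)) * r') := by ring

theorem odd_family_of_conjugation_symmetric_curves_hits_real_point
    (m : ℕ) (hm : Odd m) (a b : ℝ) (hab : a < b) (lam : ℝ)
    (γ : Fin m → ℝ → ℂ)
    (hcont : ∀ l, ContinuousOn (γ l) (Set.Icc a b))
    (ha : ∀ l, (γ l a).re < lam)
    (hb : ∀ l, (γ l b).re > lam)
    (hsym : ∀ t ∈ Set.Icc a b,
      Multiset.map (starRingEnd ℂ) (Multiset.map (fun l => γ l t) Finset.univ.val) =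
        Multiset.map (fun l => γ l t) Finset.univ.val) :
    ∃ l, ∃ t ∈ Set.Icc a b, γ l t = (lam : ℂ) := by
  set M : ℝ → Multiset ℂ := fun t => Multiset.map (fun l => γ l t) Finset.univ.val with hM
  set P : ℝ → ℂ := fun t => ((M t).map (fun z => z - (lam : ℂ))).prod with hP
  have hPfin : ∀ t, P t = ∏ l : Fin m, (γ l t - (lam : ℂ)) := by
    intro t
    rw [hP, hM]
    simp [Finset.prod_eq_multiset_prod, Multiset.map_map, Function.comp_def]
  have hcard : ∀ t, (M t).card = m := by
    intro t
    simp [hM]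
  -- P is real on [a,b]
  have hreal : ∀ t ∈ Set.Icc a b, (P t).im = 0 := fun t ht =>
    conj_prod_real lam (M t) (hsym t ht)
  -- continuity
  have hPc : ContinuousOn P (Set.Icc a b) := by
    have : ContinuousOn (fun t => ∏ l : Fin m, (γ l t - (lam : ℂ))) (Set.Icc a b) := by
      apply continuousOn_finset_prod
      intro l _
      exact (hcont l).sub continuousOn_const
    exact this.congr fun t _ => hPfin t
  have hfc : ContinuousOn (fun t => (P t).re) (Set.Icc a b) :=
    Complex.continuous_re.comp_continuousOn hPc
  -- sign at a
  have haIcc : a ∈ Set.Icc a b := ⟨le_refl a, le_of_lt hab⟩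
  have hbIcc : b ∈ Set.Icc a b := ⟨le_of_lt hab, le_refl b⟩
  obtain ⟨ra, hra, hrapos⟩ := key_sign lam (-1) (Or.inr rfl) (M a) (hsym a haIcc)
    (by
      intro z hz _
      rw [hM] at hz
      obtain ⟨l, _, rfl⟩ := Multiset.mem_map.mp hz
      have := ha l
      nlinarith)
  obtain ⟨rb, hrb, hrbpos⟩ := key_sign lam 1 (Or.inl rfl) (M b) (hsym b hbIcc)
    (by
      intro z hz _
      rw [hM] at hz
      obtain ⟨l, _, rfl⟩ := Multiset.mem_map.mp hz
      have := hb l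
      nlinarith)
  have hPa : (P a).re = ra := by simp only [hP]; rw [hra]; simp
  have hPb : (P b).re = rb := by simp only [hP]; rw [hrb]; simp
  have hmneg : (-1 : ℝ) ^ (M a).card = -1 := by
    rw [hcard a, Odd.neg_one_pow hm]
  rw [hmneg] at hrapos
  rw [hcard b, one_pow, one_mul] at hrbpos
  have hra_neg : ra < 0 := by linarith
  -- IVT
  have h0 : (0 : ℝ) ∈ Set.Icc ((fun t => (P t).re) a) ((fun t => (P t).re) b) := by
    simp only [hPa, hPb]
    exact ⟨le_of_lt hra_neg, le_of_lt hrbpos⟩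
  obtain ⟨t, ht, hft⟩ := intermediate_value_Icc (le_of_lt hab) hfc h0
  -- P t = 0
  have hPt : P t = 0 := by
    apply Complex.ext
    · exact hft
    · simpa using hreal t ht
  rw [hP] at hPt
  have hzmem : (0 : ℂ) ∈ Multiset.map (fun z => z - (lam : ℂ)) (M t) :=
    Multiset.prod_eq_zero_iff.mp hPt
  obtain ⟨w, hw, hw0⟩ := Multiset.mem_map.mp hzmem
  rw [hM] at hw
  obtain ⟨l, _, rfl⟩ := Multiset.mem_map.mp hw
  exact ⟨l, t, ht, by linear_combination hw0⟩
end

section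
/- Let n ≥ 3 and let (a_l)_{l ∈ ℤ} be a sequence of nonnegative reals. If a_l ≤ c·|l|^{n-2}·|k|^{n-2} / (||k| − |l||·(|k|^{n-1} + |l|^{n-1})) for all l ∈ ℤ with |l| ≠ |k| (k a fixed positive integer, c > 0 a constant), then ∑_{l: |l| ≠ |k|} a_l² ≤ c'·k^{2n-6} for a constant c' depending only on c and n. -/
open Real

/-- Key pointwise inequality: `x^(m+1) * K^(m+1) ≤ 2^(m+1) * K^m * (K^(m+2) + x^(m+2))`. -/
lemma key_ineq (m : ℕ) (x K : ℝ) (hx : 0 ≤ x) (hK : 1 ≤ K) :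
    x ^ (m + 1) * K ^ (m + 1) ≤ 2 ^ (m + 1) * K ^ m * (K ^ (m + 2) + x ^ (m + 2)) := by
  have hK0 : (0 : ℝ) ≤ K := by linarith
  rcases le_or_gt x (2 * K) with h | h
  · calc x ^ (m + 1) * K ^ (m + 1) ≤ (2 * K) ^ (m + 1) * K ^ (m + 1) := by gcongr
      _ = 2 ^ (m + 1) * K ^ m * K ^ (m + 2) := by rw [mul_pow]; ring
      _ ≤ 2 ^ (m + 1) * K ^ m * (K ^ (m + 2) + x ^ (m + 2)) := by
          have h1 : (0 : ℝ) ≤ x ^ (m + 2) := by positivity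
          have h2 : (0 : ℝ) ≤ 2 ^ (m + 1) * K ^ m := by positivity
          nlinarith
  · have hKx : K ≤ x := by linarith
    calc x ^ (m + 1) * K ^ (m + 1) = (x ^ (m + 1) * K ^ m) * K := by ring
      _ ≤ (x ^ (m + 1) * K ^ m) * x := by
          have : (0 : ℝ) ≤ x ^ (m + 1) * K ^ m := by positivity
          exact mul_le_mul_of_nonneg_left hKx this
      _ = K ^ m * x ^ (m + 2) := by ring
      _ ≤ 2 ^ (m + 1) * K ^ m * (K ^ (m + 2) + x ^ (m + 2)) := by
          have h1 : (0 : ℝ) ≤ K ^ (m + 2) := by positivity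
          have h2 : (0 : ℝ) ≤ K ^ m := by positivity
          have h3 : (0 : ℝ) ≤ x ^ (m + 2) := by positivity
          have h4 : (1 : ℝ) ≤ 2 ^ (m + 1) := one_le_pow₀ one_le_two
          have h5 : K ^ m * x ^ (m + 2) ≤ 2 ^ (m + 1) * (K ^ m * x ^ (m + 2)) :=
            le_mul_of_one_le_left (mul_nonneg h2 h3) h4
          have h6 : (0 : ℝ) ≤ 2 ^ (m + 1) * (K ^ m * K ^ (m + 2)) := by positivity
          nlinarith [h5, h6]
/-- The series `∑_{l ∈ ℤ} 1/l²` (with the convention `1/0 = 0`) has sum `π²/3`. -/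
lemma hasSum_int_invsq : HasSum (fun l : ℤ => 1 / (l : ℝ) ^ 2) (π ^ 2 / 3) := by
  have h1 : HasSum (fun n : ℕ => (1 : ℝ) / (n : ℝ) ^ 2) (π ^ 2 / 6) := hasSum_zeta_two
  have h2 : HasSum (fun n : ℕ => (1 : ℝ) / ((n : ℝ) + 1) ^ 2) (π ^ 2 / 6) := by
    have := (hasSum_nat_add_iff' (f := fun n : ℕ => (1 : ℝ) / (n : ℝ) ^ 2) 1).mpr h1
    simpa using this
  have h3 : HasSum (fun n : ℕ => 1 / (((-(n + 1) : ℤ)) : ℝ) ^ 2) (π ^ 2 / 6) := by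
    have e : (fun n : ℕ => 1 / (((-(n + 1) : ℤ)) : ℝ) ^ 2)
        = fun n : ℕ => (1 : ℝ) / ((n : ℝ) + 1) ^ 2 := by
      funext n; push_cast; ring
    rw [e]; exact h2
  have h4 : HasSum (fun n : ℕ => 1 / (((n : ℤ)) : ℝ) ^ 2) (π ^ 2 / 6) := by
    have e : (fun n : ℕ => 1 / (((n : ℤ)) : ℝ) ^ 2)
        = fun n : ℕ => (1 : ℝ) / (n : ℝ) ^ 2 := by
      funext n; push_cast; ring
    rw [e]; exact h1
  have := HasSum.of_nat_of_neg_add_one (f := fun l : ℤ => 1 / (l : ℝ) ^ 2) h4 h3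
  convert this using 1
  ring

theorem sum_sq_estimate (n : ℕ) (hn : 3 ≤ n) (c : ℝ) (hc : 0 < c) :
    ∃ c' : ℝ, 0 < c' ∧
      ∀ k : ℕ, 0 < k → ∀ a : ℤ → ℝ, (∀ l, 0 ≤ a l) →
        (∀ l : ℤ, |l| ≠ (k : ℤ) →
          a l ≤ c * |(l : ℝ)| ^ (n - 2) * (k : ℝ) ^ (n - 2) /
            (abs ((k : ℝ) - |(l : ℝ)|) * ((k : ℝ) ^ (n - 1) + |(l : ℝ)| ^ (n - 1)))) →
        (∑' l : ℤ, if |l| ≠ (k : ℤ) then a l ^ 2 else 0) ≤ c' * (k : ℝ) ^ (2 * n - 6) := by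
  obtain ⟨m, rfl⟩ : ∃ m, n = m + 3 := ⟨n - 3, by omega⟩
  refine ⟨8 * ((2 : ℝ) ^ (m + 1) * c) ^ 2, by positivity, ?_⟩
  intro k hk a ha hb
  simp only [show m + 3 - 2 = m + 1 from by omega, show m + 3 - 1 = m + 2 from by omega] at hb
  simp only [show 2 * (m + 3) - 6 = 2 * m from by omega]
  set K : ℝ := (k : ℝ) with hKdef
  have hK1 : (1 : ℝ) ≤ K := by
    have h1 : (1 : ℕ) ≤ k := hk
    rw [hKdef]
    exact_mod_cast h1
  have hK0 : (0 : ℝ) < K := by linarith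
  -- the dominating function
  set G : ℤ → ℝ := fun l => 1 / ((l : ℝ) - K) ^ 2 + 1 / ((l : ℝ) + K) ^ 2 with hGdef
  have hGnonneg : ∀ l, 0 ≤ G l := fun l => by positivity
  -- summability and sum of G
  have hsum0 : HasSum (fun l : ℤ => 1 / (l : ℝ) ^ 2) (π ^ 2 / 3) := hasSum_int_invsq
  have hG1 : HasSum (fun l : ℤ => 1 / ((l : ℝ) - K) ^ 2) (π ^ 2 / 3) := by
    have hcomp := ((Equiv.subRight (k : ℤ)).hasSum_iff
      (f := fun l : ℤ => 1 / (l : ℝ) ^ 2) (a := π ^ 2 / 3)).mpr hsum0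
    have e : ((fun l : ℤ => 1 / (l : ℝ) ^ 2) ∘ (Equiv.subRight (k : ℤ)))
        = fun l : ℤ => 1 / ((l : ℝ) - K) ^ 2 := by
      funext l
      simp only [Function.comp_apply, Equiv.subRight_apply]
      rw [hKdef]
      push_cast
      ring
    rwa [e] at hcomp
  have hG2 : HasSum (fun l : ℤ => 1 / ((l : ℝ) + K) ^ 2) (π ^ 2 / 3) := by
    have hcomp := ((Equiv.addRight (k : ℤ)).hasSum_iff
      (f := fun l : ℤ => 1 / (l : ℝ) ^ 2) (a := π ^ 2 / 3)).mpr hsum0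
    have e : ((fun l : ℤ => 1 / (l : ℝ) ^ 2) ∘ (Equiv.addRight (k : ℤ)))
        = fun l : ℤ => 1 / ((l : ℝ) + K) ^ 2 := by
      funext l
      simp only [Function.comp_apply, Equiv.coe_addRight]
      rw [hKdef]
      push_cast
      ring
    rwa [e] at hcomp
  have hG : HasSum G (π ^ 2 / 3 + π ^ 2 / 3) := hG1.add hG2
  -- pointwise bound
  set C : ℝ := ((2 : ℝ) ^ (m + 1) * c) ^ 2 * K ^ (2 * m) with hCdef
  have hCpos : 0 < C := by positivity
  have key : ∀ l : ℤ, (if |l| ≠ (k : ℤ) then a l ^ 2 else 0) ≤ C * G l := by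
    intro l
    by_cases h : |l| ≠ (k : ℤ)
    · rw [if_pos h]
      set x : ℝ := |(l : ℝ)| with hxdef
      have hx0 : 0 ≤ x := abs_nonneg _
      have hxcast : x = ((|l| : ℤ) : ℝ) := by push_cast [hxdef]; rfl
      have hD0 : K - x ≠ 0 := by
        have hne : ((|l| : ℤ) : ℝ) ≠ ((k : ℤ) : ℝ) := by exact_mod_cast h
        rw [hxcast, hKdef]
        intro hcon
        apply hne
        push_cast at hcon ⊢
        linarith
      have hDpos : 0 < |K - x| := abs_pos.mpr hD0
      have hSpos : 0 < K ^ (m + 2) + x ^ (m + 2) := by positivity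
      -- step 1 : a l ≤ 2^(m+1) c K^m / |K - x|
      have step1 : a l ≤ 2 ^ (m + 1) * c * K ^ m / |K - x| := by
        refine le_trans (hb l h) ?_
        rw [div_le_div_iff₀ (by positivity) hDpos]
        have hkey := key_ineq m x K hx0 hK1
        calc c * x ^ (m + 1) * K ^ (m + 1) * |K - x|
            = (c * |K - x|) * (x ^ (m + 1) * K ^ (m + 1)) := by ring
          _ ≤ (c * |K - x|) * (2 ^ (m + 1) * K ^ m * (K ^ (m + 2) + x ^ (m + 2))) := by
              have : (0 : ℝ) ≤ c * |K - x| := by positivity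
              exact mul_le_mul_of_nonneg_left hkey this
          _ = 2 ^ (m + 1) * c * K ^ m * (|K - x| * (K ^ (m + 2) + x ^ (m + 2))) := by ring
      -- step 2 : square it
      have step2 : a l ^ 2 ≤ (2 ^ (m + 1) * c * K ^ m) ^ 2 * (1 / (K - x) ^ 2) := by
        have := pow_le_pow_left₀ (ha l) step1 2
        calc a l ^ 2 ≤ (2 ^ (m + 1) * c * K ^ m / |K - x|) ^ 2 := this
          _ = (2 ^ (m + 1) * c * K ^ m) ^ 2 * (1 / (K - x) ^ 2) := by
              rw [div_pow, sq_abs]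
              ring
      -- step 3 : 1/(K-x)^2 ≤ G l
      have step3 : 1 / (K - x) ^ 2 ≤ G l := by
        rcases le_or_gt 0 l with hl | hl
        · have hxl : x = (l : ℝ) := by
            rw [hxdef, abs_of_nonneg (by exact_mod_cast hl)]
          have : (K - x) ^ 2 = ((l : ℝ) - K) ^ 2 := by rw [hxl]; ring
          simp only [hGdef]
          rw [this]
          have : (0 : ℝ) ≤ 1 / ((l : ℝ) + K) ^ 2 := by positivity
          linarith
        · have hxl : x = -(l : ℝ) := by
            rw [hxdef, abs_of_neg (by exact_mod_cast hl)]
          have : (K - x) ^ 2 = ((l : ℝ) + K) ^ 2 := by rw [hxl]; ring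
          simp only [hGdef]
          rw [this]
          have : (0 : ℝ) ≤ 1 / ((l : ℝ) - K) ^ 2 := by positivity
          linarith
      calc a l ^ 2 ≤ (2 ^ (m + 1) * c * K ^ m) ^ 2 * (1 / (K - x) ^ 2) := step2
        _ ≤ (2 ^ (m + 1) * c * K ^ m) ^ 2 * G l := by
            have : (0 : ℝ) ≤ (2 ^ (m + 1) * c * K ^ m) ^ 2 := by positivity
            exact mul_le_mul_of_nonneg_left step3 this
        _ = C * G l := by
            rw [hCdef]
            rw [show (2 : ℕ) * m = m * 2 from by ring, pow_mul]
            ring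
    · rw [if_neg h]
      positivity
  -- assemble
  have hsumCG : Summable (fun l : ℤ => C * G l) := hG.summable.mul_left C
  have hFnonneg : ∀ l : ℤ, 0 ≤ (if |l| ≠ (k : ℤ) then a l ^ 2 else 0) := by
    intro l
    by_cases h : |l| ≠ (k : ℤ)
    · rw [if_pos h]; positivity
    · rw [if_neg h]
  have hFsum : Summable (fun l : ℤ => if |l| ≠ (k : ℤ) then a l ^ 2 else 0) :=
    Summable.of_nonneg_of_le hFnonneg key hsumCG
  have hpi : π ^ 2 / 3 + π ^ 2 / 3 ≤ 8 := by
    have h1 : π < 3.15 := pi_lt_d2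
    have h2 : 0 < π := pi_pos
    nlinarith
  calc (∑' l : ℤ, if |l| ≠ (k : ℤ) then a l ^ 2 else 0)
      ≤ ∑' l : ℤ, C * G l := hFsum.tsum_le_tsum key hsumCG
    _ = C * (π ^ 2 / 3 + π ^ 2 / 3) := by rw [tsum_mul_left, hG.tsum_eq]
    _ ≤ C * 8 := by
        exact mul_le_mul_of_nonneg_left hpi hCpos.le
    _ = 8 * ((2 : ℝ) ^ (m + 1) * c) ^ 2 * K ^ (2 * m) := by rw [hCdef]; ring
end
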